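/- Let A be a unital Banach algebra over ℂ, let v be an invertible element of A, and let φ : A → ℂ be a continuous linear functional such that φ(vⁿ) = 0 for every integer n ≠ 0 (both positive and negative powers). Then φ( exp(v + v⁻¹) · (2·1 − v − v⁻¹ − v² − v⁻²) ) = 0. -/

import Mathlib

open NormedSpace Finset

private lemma sumIf_eq (n k₀ : ℕ) (h : k₀ ≤ n) (c : ℤ) (hc : c = 2 * k₀) :
    ∑ k ∈ Finset.range (n+1), (if (2*(k:ℤ)) = c then ((n.choose k : ℕ) : ℂ) else 0)
      = n.choose k₀ := by
  subst hc
  have hiff : ∀ k : ℕ, ((2*(k:ℤ) = 2*(k₀:ℤ)) ↔ k = k₀) := fun k => by omega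
  simp only [hiff]
  rw [Finset.sum_ite_eq' (Finset.range (n+1)) k₀ (fun k => ((n.choose k : ℕ) : ℂ))]
  rw [if_pos (Finset.mem_range_succ_iff.mpr h)]

private lemma sumIf_zero (n : ℕ) (c : ℤ) (h : ∀ k : ℕ, k ≤ n → 2*(k:ℤ) ≠ c) :
    ∑ k ∈ Finset.range (n+1), (if (2*(k:ℤ)) = c then ((n.choose k : ℕ) : ℂ) else 0) = 0 :=
  Finset.sum_eq_zero fun k hk => if_neg (h k (Finset.mem_range_succ_iff.mp hk))

private lemma phi_pow {A : Type*} [NormedRing A] [NormedAlgebra ℂ A]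
    (v : Aˣ) (φ : A →L[ℂ] ℂ)
    (hφ : ∀ n : ℤ, n ≠ 0 → φ ((v ^ n : Aˣ) : A) = 0) (n : ℕ) (m : ℤ) :
    φ (((v : A) + ((v⁻¹ : Aˣ) : A))^n * ((v^m : Aˣ) : A)) =
      (∑ k ∈ Finset.range (n+1), if (2*(k:ℤ)) = (n:ℤ) - m then ((n.choose k : ℕ) : ℂ) else 0)
        * φ 1 := by
  have hc : Commute (v:A) ((v⁻¹:Aˣ):A) := by
    unfold Commute SemiconjBy
    rw [Units.mul_inv, Units.inv_mul]
  rw [hc.add_pow, Finset.sum_mul, map_sum, Finset.sum_mul]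
  refine Finset.sum_congr rfl fun k hk => ?_
  have hkn : k ≤ n := Finset.mem_range_succ_iff.mp hk
  have h1 : (v:A)^k = ((v^(k:ℤ) : Aˣ) : A) := by
    rw [zpow_natCast, Units.val_pow_eq_pow_val]
  have h2 : ((v⁻¹:Aˣ):A)^(n-k) = ((v^(-(((n:ℤ))-k)) : Aˣ) : A) := by
    rw [← Units.val_pow_eq_pow_val]
    congr 1
    rw [← zpow_natCast v⁻¹ (n-k), inv_zpow, ← zpow_neg]
    congr 1
    omega
  have hnc : ((n.choose k : ℕ) : A) * ((v^m:Aˣ):A)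
      = ((v^m:Aˣ):A) * ((n.choose k : ℕ) : A) := (Nat.cast_commute _ _)
  rw [h1, h2, mul_assoc, hnc, ← mul_assoc, ← Units.val_mul, ← zpow_add, ← Units.val_mul,
    ← zpow_add]
  set e : ℤ := (k:ℤ) + -((n:ℤ)-k) + m with he
  have : ((v ^ e : Aˣ) : A) * ((n.choose k : ℕ) : A) = (n.choose k) • ((v ^ e : Aˣ) : A) := by
    rw [nsmul_eq_mul, (Nat.cast_commute _ _).eq]
  rw [this, map_nsmul, nsmul_eq_mul]
  by_cases hcond : (2*(k:ℤ)) = (n:ℤ) - m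
  · have he0 : e = 0 := by omega
    rw [he0, if_pos hcond]
    norm_num
  · rw [hφ e (by omega), if_neg hcond]
    norm_num

theorem stmt_7 {A : Type*} [NormedRing A] [NormedAlgebra ℂ A] [CompleteSpace A]
    (v : Aˣ) (φ : A →L[ℂ] ℂ)
    (hφ : ∀ n : ℤ, n ≠ 0 → φ ((v ^ n : Aˣ) : A) = 0) :
    φ (exp ((v : A) + ((v⁻¹ : Aˣ) : A)) *
        (2 • (1 : A) - (v : A) - ((v⁻¹ : Aˣ) : A)
          - (v : A) ^ 2 - ((v⁻¹ : Aˣ) : A) ^ 2)) = 0 := by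
  set a : A := (v : A) + ((v⁻¹ : Aˣ) : A) with ha
  set b : A := 2 • (1 : A) - (v : A) - ((v⁻¹ : Aˣ) : A)
      - (v : A) ^ 2 - ((v⁻¹ : Aˣ) : A) ^ 2 with hb
  set ψ : A →L[ℂ] ℂ := φ.comp ((ContinuousLinearMap.mul ℂ A).flip b) with hψdef
  have hψ : ∀ x : A, ψ x = φ (x * b) := fun x => rfl
  -- cast lemmas
  have hcast0 : ((v^(0:ℤ) : Aˣ) : A) = 1 := by norm_num
  have hcast1 : ((v^(1:ℤ) : Aˣ) : A) = (v : A) := by norm_num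
  have hcast2 : ((v^(2:ℤ) : Aˣ) : A) = (v : A)^2 := by
    rw [show (2:ℤ) = ((2:ℕ):ℤ) by norm_num, zpow_natCast, Units.val_pow_eq_pow_val]
  have hcastm1 : ((v^(-1:ℤ) : Aˣ) : A) = ((v⁻¹ : Aˣ) : A) := by
    rw [zpow_neg, zpow_one]
  have hcastm2 : ((v^(-2:ℤ) : Aˣ) : A) = ((v⁻¹ : Aˣ) : A)^2 := by
    rw [show (-2:ℤ) = -((2:ℕ):ℤ) by norm_num, zpow_neg, zpow_natCast,
      ← inv_pow, Units.val_pow_eq_pow_val]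
  -- value of each coefficient
  set S : ℕ → ℤ → ℂ := fun n m =>
    ∑ k ∈ Finset.range (n+1), if (2*(k:ℤ)) = (n:ℤ) - m then ((n.choose k : ℕ) : ℂ) else 0
    with hS
  have hval : ∀ n : ℕ, φ (a ^ n * b)
      = (2 * S n 0 - S n 1 - S n (-1) - S n 2 - S n (-2)) * φ 1 := by
    intro n
    have hexp : a ^ n * b
        = (2:ℕ) • (a^n * ((v^(0:ℤ) : Aˣ) : A)) - a^n * ((v^(1:ℤ) : Aˣ) : A)
          - a^n * ((v^(-1:ℤ) : Aˣ) : A) - a^n * ((v^(2:ℤ) : Aˣ) : A)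
          - a^n * ((v^(-2:ℤ) : Aˣ) : A) := by
      rw [hcast0, hcast1, hcast2, hcastm1, hcastm2, hb]
      simp only [mul_sub, mul_smul_comm, mul_one, smul_sub]
    rw [hexp, map_sub, map_sub, map_sub, map_sub, map_nsmul]
    rw [ha] at *
    rw [phi_pow v φ hφ n 0, phi_pow v φ hφ n 1, phi_pow v φ hφ n (-1),
      phi_pow v φ hφ n 2, phi_pow v φ hφ n (-2)]
    rw [hS]
    push_cast
    ring
  -- the exponential series
  have h1 : HasSum (fun n : ℕ => ((n.factorial : ℂ))⁻¹ • a ^ n) (exp a) := by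
    rw [exp_eq_tsum (𝕂 := ℂ)]
    exact (expSeries_summable' a).hasSum
  have h2 : HasSum (fun n : ℕ => ψ (((n.factorial : ℂ))⁻¹ • a ^ n)) (ψ (exp a)) :=
    h1.mapL ψ
  set c : ℕ → ℂ := fun n => ((n.factorial : ℂ))⁻¹ * φ (a ^ n * b) with hcdef
  have hc2 : HasSum c (φ (exp a * b)) := by
    have : (fun n : ℕ => ψ (((n.factorial : ℂ))⁻¹ • a ^ n)) = c := by
      funext n
      rw [map_smul, hψ, hcdef]
      simp [smul_eq_mul]
    rw [← this]
    rw [show φ (exp a * b) = ψ (exp a) from rfl]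
    exact h2
  -- pairwise cancellation
  have hkey : ∀ j : ℕ, c (2*j) + c (2*j+1) = 0 := by
    intro j
    rcases j with _ | i
    · have h1 : c 0 = 2 * φ 1 := by
        rw [hcdef]
        simp only []
        rw [hval 0]
        simp only [hS]
        norm_num [Finset.sum_range_succ]
      have h2 : c 1 = -2 * φ 1 := by
        rw [hcdef]
        simp only []
        rw [hval 1]
        simp only [hS]
        norm_num [Finset.sum_range_succ]
      rw [show 2*0 = 0 by ring, show 2*0+1 = 1 by ring, h1, h2]
      ring
    · have hS0 : S (2*i+2) 0 = (((2*i+2).choose (i+1) : ℕ) : ℂ) := by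
        simp only [hS]; exact sumIf_eq _ _ (by omega) _ (by push_cast; ring)
      have hS1 : S (2*i+2) 1 = 0 := by
        simp only [hS]; exact sumIf_zero _ _ (fun k hk => by omega)
      have hSm1 : S (2*i+2) (-1) = 0 := by
        simp only [hS]; exact sumIf_zero _ _ (fun k hk => by omega)
      have hS2 : S (2*i+2) 2 = (((2*i+2).choose i : ℕ) : ℂ) := by
        simp only [hS]; exact sumIf_eq _ _ (by omega) _ (by push_cast; ring)
      have hSm2 : S (2*i+2) (-2) = (((2*i+2).choose (i+2) : ℕ) : ℂ) := by
        simp only [hS]; exact sumIf_eq _ _ (by omega) _ (by push_cast; ring)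
      have hT0 : S (2*i+3) 0 = 0 := by
        simp only [hS]; exact sumIf_zero _ _ (fun k hk => by omega)
      have hT1 : S (2*i+3) 1 = (((2*i+3).choose (i+1) : ℕ) : ℂ) := by
        simp only [hS]; exact sumIf_eq _ _ (by omega) _ (by push_cast; ring)
      have hTm1 : S (2*i+3) (-1) = (((2*i+3).choose (i+2) : ℕ) : ℂ) := by
        simp only [hS]; exact sumIf_eq _ _ (by omega) _ (by push_cast; ring)
      have hT2 : S (2*i+3) 2 = 0 := by
        simp only [hS]; exact sumIf_zero _ _ (fun k hk => by omega)
      have hTm2 : S (2*i+3) (-2) = 0 := by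
        simp only [hS]; exact sumIf_zero _ _ (fun k hk => by omega)
      have hfacn : (2*i+3).factorial = (2*i+3) * (2*i+2).factorial := by
        rw [show 2*i+3 = (2*i+2)+1 by ring]
        exact Nat.factorial_succ _
      have hfac : ((2*i+3).factorial : ℂ) = (2*(i:ℂ)+3) * ((2*i+2).factorial : ℂ) := by
        rw [hfacn]; push_cast; ring
      have hfne : ((2*i+2).factorial : ℂ) ≠ 0 := Nat.cast_ne_zero.mpr (Nat.factorial_ne_zero _)
      have h3ne : (2*(i:ℂ)+3) ≠ 0 := by
        have h := Nat.cast_ne_zero (R := ℂ).mpr (show 2*i+3 ≠ 0 by omega)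
        push_cast at h
        convert h using 2 <;> ring_nf
      have hp1n : (2*i+3).choose (i+1) = (2*i+2).choose i + (2*i+2).choose (i+1) := by
        rw [show 2*i+3 = (2*i+2)+1 by ring]
        exact Nat.choose_succ_succ _ _
      have hp2n : (2*i+3).choose (i+2) = (2*i+2).choose (i+1) + (2*i+2).choose (i+2) := by
        rw [show 2*i+3 = (2*i+2)+1 by ring]
        exact Nat.choose_succ_succ _ _
      have hp1 : (((2*i+3).choose (i+1) : ℕ) : ℂ)
          = ((2*i+2).choose i : ℕ) + ((2*i+2).choose (i+1) : ℕ) := by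
        exact_mod_cast congrArg (Nat.cast (R := ℂ)) hp1n
      have hp2 : (((2*i+3).choose (i+2) : ℕ) : ℂ)
          = ((2*i+2).choose (i+1) : ℕ) + ((2*i+2).choose (i+2) : ℕ) := by
        exact_mod_cast congrArg (Nat.cast (R := ℂ)) hp2n
      have hr1n : (2*i+2).choose (i+1) * (i+1) = (2*i+2).choose i * (i+2) := by
        have := Nat.choose_succ_right_eq (2*i+2) i
        rwa [show 2*i+2-i = i+2 by omega] at this
      have hr2n : (2*i+2).choose (i+2) * (i+2) = (2*i+2).choose (i+1) * (i+1) := by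
        have := Nat.choose_succ_right_eq (2*i+2) (i+1)
        rwa [show 2*i+2-(i+1) = i+1 by omega] at this
      have hr1 : (((2*i+2).choose (i+1) : ℕ) : ℂ) * ((i:ℂ)+1)
          = (((2*i+2).choose i : ℕ) : ℂ) * ((i:ℂ)+2) := by exact_mod_cast hr1n
      have hr2 : (((2*i+2).choose (i+2) : ℕ) : ℂ) * ((i:ℂ)+2)
          = (((2*i+2).choose (i+1) : ℕ) : ℂ) * ((i:ℂ)+1) := by exact_mod_cast hr2n
      rw [show 2*(i+1) = 2*i+2 by ring]
      rw [show 2*i+2+1 = 2*i+3 by ring]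
      rw [hcdef]
      simp only []
      rw [hval (2*i+2), hval (2*i+3), hS0, hS1, hSm1, hS2, hSm2, hT0, hT1, hTm1, hT2, hTm2,
        hfac, hp1, hp2]
      field_simp
      linear_combination (2 * φ 1) * (hr1 - hr2)
  -- conclude
  have hsummable := hc2.summable
  have hse : Summable fun k => c (2*k) :=
    hsummable.comp_injective fun x y h => by omega
  have hso : Summable fun k => c (2*k+1) :=
    hsummable.comp_injective fun x y h => by omega
  have := tsum_even_add_odd hse hso
  rw [hc2.tsum_eq] at this
  have hodd : (fun k => c (2*k+1)) = fun k => -(c (2*k)) := by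
    funext k
    linear_combination hkey k
  rw [hodd, tsum_neg] at this
  linear_combination -this
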